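/- Let $\alpha > 1$ be a real number, $Q$ be an $r$-graph on $q$ vertices, and $\mathcal{H}$ be an $r$-graph on vertex set $[n]$. If $\mathbf{x} = (x_1,\ldots,x_n)$ is a nonnegative vector in $\mathrm{OPT}_{\alpha,Q}(\mathcal{H})$, then for every $i \in [n]$, $\partial_i P_{Q,\mathcal{H}}(x_1,\ldots,x_n) = q \cdot \lambda_{\alpha,Q}(\mathcal{H}) \cdot x_i^{\alpha - 1}$. -/

import Mathlib

open scoped Classical
open Finset Filter Real

/-- An `r`-uniform hypergraph on vertex set `Fin n`. -/
structure RGraph (r n : ℕ) where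
  edges : Finset (Finset (Fin n))
  card_eq : ∀ e ∈ edges, e.card = r

/-- The set (as a `Finset`) of injective homomorphisms from `Q` to `H`. -/
noncomputable def Inj {r a b : ℕ} (Q : RGraph r a) (H : RGraph r b) :
    Finset (Fin a → Fin b) :=
  Finset.univ.filter fun φ => Function.Injective φ ∧ ∀ e ∈ Q.edges, e.image φ ∈ H.edges

/-- The Lagrangian `Q`-polynomial of `H`. -/
noncomputable def lagPoly {r a n : ℕ} (Q : RGraph r a) (H : RGraph r n)
    (x : Fin n → ℝ) : ℝ :=
  ∑ φ ∈ Inj Q H, ∏ i ∈ Finset.univ.image φ, x i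

/-- The domain `Δ_α^{n-1} = {x : |x_1|^α + ⋯ + |x_n|^α = 1}`. -/
def simplex (α : ℝ) (n : ℕ) : Set (Fin n → ℝ) :=
  {x | ∑ i, |x i| ^ α = 1}

/-- The `(α,Q)`-spectral radius of `H`. -/
noncomputable def specRad (α : ℝ) {r a n : ℕ} (Q : RGraph r a) (H : RGraph r n) : ℝ :=
  sSup (lagPoly Q H '' simplex α n)

/-- The set of optimal vectors. -/
noncomputable def OPT (α : ℝ) {r a n : ℕ} (Q : RGraph r a) (H : RGraph r n) :
    Set (Fin n → ℝ) :=
  {x ∈ simplex α n | lagPoly Q H x = specRad α Q H}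

/-- **Lemma (Lagrange multiplier identity):** for a nonnegative optimal vector `x`,
the `i`-th partial derivative of the Lagrangian `Q`-polynomial at `x` equals
`q ⬝ λ_{α,Q}(H) ⬝ x_i^{α-1}`. -/
lemma myHasStrictDerivAt_abs_rpow {p : ℝ} (hp : 1 < p) (t : ℝ) :
    HasStrictDerivAt (fun s : ℝ => |s| ^ p) (p * |t| ^ (p - 2) * t) t := by
  have h := (contDiff_norm_rpow (E := ℝ) hp).contDiffAt (x := t)
  have h' : ContDiffAt ℝ 1 (fun s : ℝ => |s| ^ p) t := by
    simpa [Real.norm_eq_abs] using h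
  exact h'.hasStrictDerivAt' (hasDerivAt_abs_rpow t hp) one_ne_zero

theorem lagrange_multiplier {r q n : ℕ} {α : ℝ} (hα : 1 < α)
    (Q : RGraph r q) (H : RGraph r n)
    (x : Fin n → ℝ) (hx : x ∈ OPT α Q H) (hnn : ∀ i, 0 ≤ x i) :
    ∀ i : Fin n,
      fderiv ℝ (lagPoly Q H) x (Pi.single i 1)
        = q * specRad α Q H * x i ^ (α - 1) := by
  intro i
  obtain ⟨hxs, hxval⟩ := hx
  have hxs' : ∑ j, |x j| ^ α = 1 := hxs
  have hα0 : (0:ℝ) < α := by linarith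
  -- the objective's strict derivative
  set P' : (Fin n → ℝ) →L[ℝ] ℝ :=
    ∑ φ ∈ Inj Q H, ∑ j ∈ Finset.univ.image φ,
      (∏ k ∈ (Finset.univ.image φ).erase j, x k) • ContinuousLinearMap.proj j with hP'def
  have hP' : HasStrictFDerivAt (lagPoly Q H) P' x := by
    exact HasStrictFDerivAt.fun_sum (A := fun φ (y : Fin n → ℝ) => ∏ i ∈ Finset.univ.image φ, y i)
      (fun φ _ => hasStrictFDerivAt_finset_prod)
  -- the constraint's strict derivative
  set c : Fin n → ℝ := fun j => α * |x j| ^ (α - 2) * x j with hcdef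
  set g' : (Fin n → ℝ) →L[ℝ] ℝ := ∑ j, c j • ContinuousLinearMap.proj j with hg'def
  have hg' : HasStrictFDerivAt (fun y : Fin n → ℝ => ∑ j, |y j| ^ α) g' x := by
    refine HasStrictFDerivAt.fun_sum (A := fun j (y : Fin n → ℝ) => |y j| ^ α) (fun j _ => ?_)
    have hp := ContinuousLinearMap.hasStrictFDerivAt (𝕜 := ℝ)
      (ContinuousLinearMap.proj (R := ℝ) (φ := fun _ : Fin n => ℝ) j) (x := x)
    exact (myHasStrictDerivAt_abs_rpow hα (x j)).comp_hasStrictFDerivAt x hp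
  -- simplify the constraint coefficients
  have hc : ∀ j, c j = α * x j ^ (α - 1) := by
    intro j
    rcases (hnn j).eq_or_lt with h | h
    · rw [hcdef]
      simp only [← h, mul_zero, abs_zero]
      rw [Real.zero_rpow (by linarith : α - 1 ≠ 0), mul_zero]
    · rw [hcdef]
      simp only [abs_of_pos h]
      have h2 := Real.rpow_add_one h.ne' (α - 2)
      rw [show α - 2 + 1 = α - 1 by ring] at h2
      rw [mul_assoc, ← h2]
  -- continuity / compactness facts
  have hPcont : Continuous (lagPoly Q H) := by
    exact continuous_finset_sum _ fun φ _ => continuous_finset_prod _ fun j _ => continuous_apply j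
  have hclosed : IsClosed (simplex α n) := by
    have hgc : Continuous fun y : Fin n → ℝ => ∑ j, |y j| ^ α :=
      continuous_finset_sum _ fun j _ =>
        ((continuous_apply j).abs).rpow_const fun y => Or.inr (by linarith)
    exact isClosed_eq hgc continuous_const
  have hsub : simplex α n ⊆ Metric.closedBall 0 1 := by
    intro y hy
    have hy' : ∑ j, |y j| ^ α = 1 := hy
    rw [Metric.mem_closedBall, dist_zero_right]
    rw [pi_norm_le_iff_of_nonneg zero_le_one]
    intro j
    rw [Real.norm_eq_abs]
    have h1 : |y j| ^ α ≤ 1 := by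
      rw [← hy']
      exact Finset.single_le_sum (fun k _ => Real.rpow_nonneg (abs_nonneg _) α)
        (Finset.mem_univ j)
    by_contra hgt
    push_neg at hgt
    have h2 : (1:ℝ) < |y j| ^ α :=
      (Real.one_lt_rpow_iff_of_pos (by linarith)).mpr (Or.inl ⟨hgt, hα0⟩)
    linarith
  have hcpt : IsCompact (simplex α n) :=
    (isCompact_closedBall (0 : Fin n → ℝ) 1).of_isClosed_subset hclosed hsub
  -- global maximality
  have hmax : ∀ y ∈ simplex α n, lagPoly Q H y ≤ lagPoly Q H x := by
    intro y hy
    rw [hxval]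
    exact le_csSup (hcpt.image hPcont).bddAbove ⟨y, hy, rfl⟩
  have hextr : IsLocalExtrOn (lagPoly Q H)
      {y : Fin n → ℝ | (∑ j, |y j| ^ α) = ∑ j, |x j| ^ α} x := by
    have hseteq : {y : Fin n → ℝ | (∑ j, |y j| ^ α) = ∑ j, |x j| ^ α} = simplex α n := by
      rw [hxs']; rfl
    rw [hseteq]
    exact Or.inr (IsMaxOn.localize hmax)
  -- Lagrange multipliers
  obtain ⟨a, b, hab, heq⟩ := hextr.exists_multipliers_of_hasStrictFDerivAt_1d hg' hP'
  have heval : ∀ v, a * g' v + b * P' v = 0 := by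
    intro v
    have h := congrArg (fun L : (Fin n → ℝ) →L[ℝ] ℝ => L v) heq
    simpa using h
  -- apply g' to vectors
  have hg'app : ∀ v : Fin n → ℝ, g' v = ∑ j, c j * v j := by
    intro v
    rw [hg'def]
    simp [ContinuousLinearMap.sum_apply, ContinuousLinearMap.smul_apply,
      ContinuousLinearMap.proj_apply, smul_eq_mul]
  have hgx : g' x = α := by
    rw [hg'app]
    have hterm : ∀ j, c j * x j = α * x j ^ α := by
      intro j
      rw [hc j]
      rcases (hnn j).eq_or_lt with h | h
      · rw [← h, Real.zero_rpow (by linarith : α ≠ 0), mul_zero, mul_zero]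
      · have h2 := Real.rpow_add_one h.ne' (α - 1)
        rw [show α - 1 + 1 = α by ring] at h2
        rw [mul_assoc, ← h2]
    rw [Finset.sum_congr rfl fun j _ => hterm j, ← Finset.mul_sum]
    have : ∑ j, x j ^ α = 1 := by
      rw [← hxs']
      exact Finset.sum_congr rfl fun j _ => by rw [abs_of_nonneg (hnn j)]
    rw [this, mul_one]
  have hgei : g' (Pi.single i 1) = α * x i ^ (α - 1) := by
    rw [hg'app, ← hc i]
    rw [Finset.sum_eq_single i]
    · rw [Pi.single_eq_same, mul_one]
    · intro j _ hne
      rw [Pi.single_eq_of_ne hne, mul_zero]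
    · intro h; exact absurd (Finset.mem_univ i) h
  -- Euler identity
  have hPx : P' x = q * lagPoly Q H x := by
    rw [hP'def]
    simp only [ContinuousLinearMap.sum_apply, ContinuousLinearMap.smul_apply,
      ContinuousLinearMap.proj_apply, smul_eq_mul]
    rw [lagPoly, Finset.mul_sum]
    apply Finset.sum_congr rfl
    intro φ hφ
    have hinj : Function.Injective φ := by
      have := Finset.mem_filter.mp hφ
      exact this.2.1
    have hcard : (Finset.univ.image φ).card = q := by
      rw [Finset.card_image_of_injective _ hinj, Finset.card_univ, Fintype.card_fin]
    calc ∑ j ∈ Finset.univ.image φ, (∏ k ∈ (Finset.univ.image φ).erase j, x k) * x j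
        = ∑ j ∈ Finset.univ.image φ, ∏ k ∈ Finset.univ.image φ, x k := by
          apply Finset.sum_congr rfl
          intro j hj
          rw [mul_comm, Finset.mul_prod_erase _ _ hj]
      _ = (Finset.univ.image φ).card • ∏ k ∈ Finset.univ.image φ, x k :=
          Finset.sum_const _
      _ = q * ∏ k ∈ Finset.univ.image φ, x k := by rw [hcard, nsmul_eq_mul]
  -- the two scalar equations
  have e1 : a * α + b * ((q : ℝ) * specRad α Q H) = 0 := by
    have := heval x
    rwa [hgx, hPx, hxval] at this
  have e2 : a * (α * x i ^ (α - 1)) + b * P' (Pi.single i 1) = 0 := by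
    have := heval (Pi.single i 1)
    rwa [hgei] at this
  have hb : b ≠ 0 := by
    rintro rfl
    have ha : a = 0 := by
      have : a * α = 0 := by linarith
      rcases mul_eq_zero.mp this with h | h
      · exact h
      · exact absurd h (by linarith)
    exact hab (by simp [ha])
  have key : b * (P' (Pi.single i 1) - (q : ℝ) * specRad α Q H * x i ^ (α - 1)) = 0 := by
    linear_combination e2 - x i ^ (α - 1) * e1
  have hfinal : P' (Pi.single i 1) = (q : ℝ) * specRad α Q H * x i ^ (α - 1) := by
    rcases mul_eq_zero.mp key with h | h
    · exact absurd h hb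
    · linarith [sub_eq_zero.mp h]
  rw [hP'.hasFDerivAt.fderiv]
  exact hfinal
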